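/- For n, m, k ∈ ℕ with k > m-n, S(n,m,k) ≤ (m!/(m-k)!) · n^(m-k). -/

import Mathlib

open Finset

/-- One step of the linear parking process: the driver with choice `c` takes the
first free space with index at least `c`, if any; otherwise the failure count increases. -/
def parkStep {n : ℕ} (p : Finset (Fin n) × ℕ) (c : Fin n) : Finset (Fin n) × ℕ :=
  if h : ((Finset.univ \ p.1).filter (fun x => c ≤ x)).Nonempty then
    (insert (((Finset.univ \ p.1).filter (fun x => c ≤ x)).min' h) p.1, p.2)
  else
    (p.1, p.2 + 1)

/-- The set of occupied spaces and the number of drivers who fail to park,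
when drivers `0, 1, ..., m-1` with choices `f 0, f 1, ..., f (m-1)` arrive in order. -/
def parkRun {n m : ℕ} (f : Fin m → Fin n) : Finset (Fin n) × ℕ :=
  (List.ofFn f).foldl parkStep (∅, 0)

/-- The defect of an assignment: the number of drivers who fail to park. -/
def defect {n m : ℕ} (f : Fin m → Fin n) : ℕ := (parkRun f).2

/-- `cp n m k` is the number of assignments of `m` drivers to `n` spaces
under which exactly `k` drivers fail to park. -/
def cp (n m k : ℕ) : ℕ :=
  (Finset.univ.filter (fun f : Fin m → Fin n => defect f = k)).card

/-- The Abel-type partial sum `S(n,m,k)`: it equals `n^m` when `k ≤ m - n`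
(i.e. `n + k ≤ m`) and `Σ_{i=0}^{m-k} C(m,i)·(n-m+k)·(n-m+k+i)^(i-1)·(m-k-i)^(m-i)`
otherwise, the `i = 0` term being interpreted as `(m-k)^m`. -/
def S (n m k : ℕ) : ℕ :=
  if n + k ≤ m then n ^ m
  else ∑ i ∈ Finset.range (m - k + 1),
    if i = 0 then (m - k) ^ m
    else Nat.choose m i * (n + k - m) * (n + k - m + i) ^ (i - 1) * (m - k - i) ^ (m - i)

section AbelIdentity

open Polynomial

/-- Iterated forward differences of a polynomial of low degree vanish. -/
lemma fd_pow (x : ℚ) : ∀ N : ℕ, ∀ M : ℕ, N < M → ∀ y : ℚ,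
    (fwdDiff (1:ℚ))^[M] (fun z : ℚ => (x + z) ^ N) y = 0 := by
  intro N
  induction N using Nat.strong_induction_on with
  | _ N IH =>
    intro M hM y
    match M, hM with
    | (M' + 1), hM =>
      rw [Function.iterate_succ_apply]
      have hΔ : fwdDiff (1:ℚ) (fun z : ℚ => (x + z) ^ N)
          = ∑ j ∈ Finset.range N, (N.choose j : ℚ) • (fun z : ℚ => (x + z) ^ j) := by
        funext z
        have hb : (x + (z + 1)) ^ N
            = ∑ j ∈ Finset.range (N + 1), (x + z) ^ j * 1 ^ (N - j) * N.choose j := by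
          rw [← add_pow]; ring_nf
        simp only [fwdDiff, Finset.sum_apply, Pi.smul_apply, smul_eq_mul]
        rw [hb, Finset.sum_range_succ]
        simp only [one_pow, mul_one, Nat.choose_self, Nat.cast_one, add_sub_cancel_right]
        exact Finset.sum_congr rfl fun j _ => by ring
      rw [hΔ, fwdDiff_iter_finset_sum, Finset.sum_apply]
      refine Finset.sum_eq_zero fun j hj => ?_
      have hj' := Finset.mem_range.mp hj
      rw [fwdDiff_iter_const_smul, Pi.smul_apply, IH j hj' M' (by omega) y, smul_zero]

/-- Alternating binomial sums of a low-degree polynomial vanish. -/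
lemma alt_sum_pow (x : ℚ) (N M : ℕ) (h : N < M) :
    ∑ i ∈ Finset.range (M + 1), (-1 : ℚ) ^ (M - i) * (M.choose i) * (x + i) ^ N = 0 := by
  have h0 := fd_pow x N M h 0
  rw [fwdDiff_iter_eq_sum_shift] at h0
  rw [← h0]
  refine Finset.sum_congr rfl fun i _ => ?_
  push_cast [zsmul_eq_mul]
  ring_nf

/-- The Abel term `x·(x+i)^(i-1)`, with the `i = 0` case interpreted as `1`. -/
def abelT (x : ℚ) : ℕ → ℚ
  | 0 => 1
  | (i+1) => x * (x + (i+1 : ℕ)) ^ i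

lemma poly_eq_of_deriv (p q : ℚ[X]) (h : derivative p = derivative q) (t : ℚ)
    (hp : p.eval t = q.eval t) : p = q := by
  have h1 : derivative (p - q) = 0 := by rw [derivative_sub, h, sub_self]
  have h2 : p - q = C ((p - q).coeff 0) := eq_C_of_derivative_eq_zero h1
  have h3 : (p - q).eval t = (p - q).coeff 0 := by rw [h2]; simp
  rw [eval_sub, hp, sub_self] at h3
  rw [← sub_eq_zero, h2, ← h3, map_zero]

/-- Abel's binomial identity, in polynomial form. -/
lemma abelPoly (N : ℕ) : ∀ (x s : ℚ),
    (∑ i ∈ Finset.range (N+1),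
      C ((N.choose i : ℚ) * abelT x i) * (X + C (((N - i : ℕ) : ℚ) + s)) ^ (N - i))
      = (X + C (x + N + s)) ^ N := by
  induction N with
  | zero => intro x s; simp [abelT]
  | succ N IH =>
    intro x s
    have hch : ∀ i, i ≤ N → ((N+1-i) * (N+1).choose i : ℕ) = (N+1) * N.choose i := by
      intro i hi
      have h1 : (N+1).choose (i+1) * (i+1) = (N+1).choose i * ((N+1) - i) :=
        Nat.choose_succ_right_eq (N+1) i
      have h2 : (N+1) * N.choose i = (N+1).choose (i+1) * (i+1) := by
        simpa using Nat.add_one_mul_choose_eq N i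
      calc (N+1-i) * (N+1).choose i = (N+1).choose i * ((N+1)-i) := mul_comm _ _
        _ = (N+1).choose (i+1) * (i+1) := h1.symm
        _ = (N+1) * N.choose i := h2.symm
    have hstep : ∀ i ∈ Finset.range (N+1),
        C (((N+1).choose i : ℚ) * abelT x i)
            * derivative ((X + C ((((N+1) - i : ℕ) : ℚ) + s)) ^ ((N+1) - i))
        = C ((N:ℚ)+1) * (C ((N.choose i : ℚ) * abelT x i)
            * (X + C (((N - i : ℕ) : ℚ) + (s+1))) ^ (N - i)) := by
      intro i hi
      have hi' : i ≤ N := Nat.lt_succ_iff.mp (Finset.mem_range.mp hi)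
      have e1 : (N+1) - i = (N - i) + 1 := by omega
      have e2 : (((N - i) + 1 : ℕ) : ℚ) + s = ((N - i : ℕ) : ℚ) + (s + 1) := by
        push_cast; ring
      rw [derivative_pow]
      simp only [derivative_add, derivative_X, derivative_C, add_zero, mul_one]
      rw [e1, Nat.add_sub_cancel, e2]
      have e4 : ((N - i + 1 : ℕ) : ℚ) * (((N+1).choose i : ℕ) : ℚ)
          = ((N:ℚ)+1) * ((N.choose i : ℕ) : ℚ) := by
        have h5 := hch i hi'
        rw [e1] at h5
        exact_mod_cast congrArg (Nat.cast (R := ℚ)) h5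
      rw [← mul_assoc, ← C_mul, ← mul_assoc, ← C_mul]
      congr 1
      congr 1
      linear_combination abelT x i * e4
    have hderiv : derivative
        (∑ i ∈ Finset.range (N+1+1), C (((N+1).choose i : ℚ) * abelT x i)
          * (X + C ((((N+1) - i : ℕ) : ℚ) + s)) ^ ((N+1) - i))
        = derivative ((X + C (x + ((N+1:ℕ):ℚ) + s)) ^ (N+1)) := by
      rw [derivative_sum]
      simp only [derivative_C_mul]
      rw [Finset.sum_range_succ]
      simp only [Nat.sub_self, pow_zero, derivative_one, mul_zero, add_zero]
      rw [Finset.sum_congr rfl hstep, ← Finset.mul_sum, IH x (s+1)]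
      rw [derivative_pow]
      simp only [derivative_add, derivative_X, derivative_C, add_zero, mul_one,
        Nat.add_sub_cancel]
      push_cast
      ring
    set t : ℚ := -(x + ((N+1:ℕ):ℚ) + s) with ht
    have hPt : Polynomial.eval t (∑ i ∈ Finset.range (N+1+1),
        C (((N+1).choose i : ℚ) * abelT x i) * (X + C ((((N+1) - i : ℕ) : ℚ) + s)) ^ ((N+1) - i)) = 0 := by
      rw [eval_finset_sum]
      simp only [eval_mul, eval_pow, eval_add, eval_X, eval_C]
      have hterm : ∀ i ∈ Finset.range (N+1+1),
          ((N+1).choose i : ℚ) * abelT x i * (t + ((((N+1) - i : ℕ) : ℚ) + s)) ^ ((N+1) - i)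
          = x * ((-1:ℚ) ^ ((N+1) - i) * (((N+1).choose i : ℕ) : ℚ) * (x + i) ^ N) := by
        intro i hi
        have hi' : i ≤ N+1 := Nat.lt_succ_iff.mp (Finset.mem_range.mp hi)
        have e1 : t + ((((N+1) - i : ℕ) : ℚ) + s) = -(x + i) := by
          rw [ht, Nat.cast_sub hi']; push_cast; ring
        rw [e1, neg_pow]
        match i with
        | 0 =>
          simp only [abelT]
          rw [Nat.sub_zero, pow_succ]
          push_cast
          ring
        | (j+1) =>
          have e2 : (N+1) - (j+1) = N - j := by omega
          simp only [abelT]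
          rw [e2]
          have e5 : (x + ((j+1:ℕ):ℚ)) ^ j * (x + ((j+1:ℕ):ℚ)) ^ (N - j) = (x + ((j+1:ℕ):ℚ)) ^ N := by
            rw [← pow_add]; congr 1; omega
          push_cast at e5 ⊢
          linear_combination ((N+1).choose (j+1) : ℚ) * x * (-1:ℚ)^(N-j) * e5
      rw [Finset.sum_congr rfl hterm, ← Finset.mul_sum,
        alt_sum_pow x N (N+1) (Nat.lt_succ_self N), mul_zero]
    have hQt : Polynomial.eval t ((X + C (x + ((N+1:ℕ):ℚ) + s)) ^ (N+1)) = 0 := by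
      simp only [eval_pow, eval_add, eval_X, eval_C, ht]
      rw [show -(x + ((N+1:ℕ):ℚ) + s) + (x + ((N+1:ℕ):ℚ) + s) = 0 by ring]
      exact zero_pow (Nat.succ_ne_zero N)
    exact poly_eq_of_deriv _ _ hderiv t (by rw [hPt, hQt])

/-- Abel's binomial identity over `ℚ`. -/
lemma abel_rat (x : ℚ) (N : ℕ) :
    ∑ i ∈ Finset.range (N+1), (N.choose i : ℚ) * abelT x i * ((N - i : ℕ) : ℚ) ^ (N - i)
      = (x + N) ^ N := by
  have h := congrArg (Polynomial.eval 0) (abelPoly N x 0)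
  rw [eval_finset_sum] at h
  simp only [eval_mul, eval_pow, eval_add, eval_X, eval_C, zero_add, add_zero] at h
  exact h

/-- Abel's binomial identity over `ℕ`. -/
lemma abel_nat (x N : ℕ) :
    ∑ i ∈ Finset.range (N+1),
      (if i = 0 then N^N else N.choose i * x * (x+i)^(i-1) * (N-i)^(N-i)) = (x+N)^N := by
  have h := abel_rat (x:ℚ) N
  have key : ∀ i ∈ Finset.range (N+1),
      (((if i = 0 then N^N else N.choose i * x * (x+i)^(i-1) * (N-i)^(N-i)) : ℕ) : ℚ)
      = (N.choose i : ℚ) * abelT (x:ℚ) i * ((N - i : ℕ) : ℚ) ^ (N - i) := by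
    intro i hi
    match i with
    | 0 => simp [abelT]
    | (j+1) =>
      simp only [if_neg (Nat.succ_ne_zero j), abelT]
      rw [Nat.add_sub_cancel]
      push_cast
      ring
  have hcast : (((∑ i ∈ Finset.range (N+1),
      (if i = 0 then N^N else N.choose i * x * (x+i)^(i-1) * (N-i)^(N-i))) : ℕ) : ℚ)
      = ((x:ℚ) + N) ^ N := by
    rw [Nat.cast_sum, Finset.sum_congr rfl key, h]
  exact_mod_cast hcast

end AbelIdentity

/-- The key coefficient inequality. -/
lemma key_ineq (m k i : ℕ) (hk : k ≤ m) (hi : i ≤ m - k) :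
    m.choose i * (m - k - i)^k ≤ m.descFactorial k * (m - k).choose i := by
  have him : i ≤ m := le_trans hi (Nat.sub_le m k)
  have hkmi : k ≤ m - i := by omega
  refine Nat.le_of_mul_le_mul_right ?_
    (Nat.mul_pos (Nat.factorial_pos i) (Nat.factorial_pos (m - i)))
  have e1 : m.choose i * (m-k-i)^k * (i.factorial * (m-i).factorial)
      = m.factorial * (m-k-i)^k := by
    rw [← Nat.choose_mul_factorial_mul_factorial him]; ring
  have e2 : m.descFactorial k * (m-k).choose i * (i.factorial * (m-i).factorial)
      = m.factorial * ((m-i).descFactorial k) := by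
    have h2 : (m - i).factorial = (m - i - k).factorial * (m-i).descFactorial k :=
      (Nat.factorial_mul_descFactorial hkmi).symm
    have h3 : m - i - k = m - k - i := by omega
    have h4 : (m-k).choose i * i.factorial * (m-k-i).factorial = (m-k).factorial :=
      Nat.choose_mul_factorial_mul_factorial hi
    have h5 : (m-k).factorial * m.descFactorial k = m.factorial :=
      Nat.factorial_mul_descFactorial hk
    rw [h2, h3, ← h5, ← h4]; ring
  rw [e1, e2]
  refine Nat.mul_le_mul_left _ ?_
  calc (m-k-i)^k ≤ ((m-i)+1-k)^k := Nat.pow_le_pow_left (by omega) k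
    _ ≤ (m-i).descFactorial k := Nat.pow_sub_le_descFactorial (m-i) k

theorem stmt15 (n m k : ℕ) (h : m < n + k) :
    S n m k ≤ (Nat.factorial m / Nat.factorial (m - k)) * n ^ (m - k) := by
  unfold S
  rw [if_neg (by omega)]
  by_cases hkm : m ≤ k
  · have hmk : m - k = 0 := by omega
    rw [hmk]
    rw [Finset.sum_range_one, if_pos rfl]
    simp only [Nat.factorial_zero, Nat.div_one, pow_zero, mul_one]
    calc (0:ℕ)^m ≤ 1^m := Nat.pow_le_pow_left (Nat.zero_le 1) m
      _ = 1 := one_pow m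
      _ ≤ m.factorial := Nat.one_le_iff_ne_zero.mpr (Nat.factorial_pos m).ne'
  · push_neg at hkm
    have hk : k ≤ m := le_of_lt hkm
    rw [← Nat.descFactorial_eq_div hk]
    set N := m - k with hN
    set x := n + k - m with hx
    have hxN : x + N = n := by omega
    have hterm : ∀ i ∈ Finset.range (N+1),
        (if i = 0 then N ^ m else m.choose i * x * (x+i)^(i-1) * (N-i)^(m-i))
        ≤ m.descFactorial k *
          (if i = 0 then N^N else N.choose i * x * (x+i)^(i-1) * (N-i)^(N-i)) := by
      intro i hi
      have hiN : i ≤ N := Nat.lt_succ_iff.mp (Finset.mem_range.mp hi)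
      match i with
      | 0 =>
        simp only [if_pos rfl]
        have hNk : N^k ≤ m.descFactorial k := by
          calc N^k ≤ (m+1-k)^k := Nat.pow_le_pow_left (by omega) k
            _ ≤ m.descFactorial k := Nat.pow_sub_le_descFactorial m k
        calc N^m = N^N * N^k := by rw [← pow_add]; congr 1; omega
          _ ≤ N^N * m.descFactorial k := Nat.mul_le_mul_left _ hNk
          _ = m.descFactorial k * N^N := mul_comm _ _
      | (j+1) =>
        simp only [if_neg (Nat.succ_ne_zero j)]
        have hmi : m - (j+1) = (N - (j+1)) + k := by omega
        rw [hmi, pow_add]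
        have hkey : m.choose (j+1) * (N - (j+1))^k
            ≤ m.descFactorial k * N.choose (j+1) := by
          have := key_ineq m k (j+1) hk (by omega)
          rw [← hN] at this
          exact this
        calc m.choose (j+1) * x * (x+(j+1))^(j+1-1) * ((N-(j+1))^(N-(j+1)) * (N-(j+1))^k)
            = (m.choose (j+1) * (N-(j+1))^k) * (x * (x+(j+1))^(j+1-1) * (N-(j+1))^(N-(j+1))) := by
              ring
          _ ≤ (m.descFactorial k * N.choose (j+1))
              * (x * (x+(j+1))^(j+1-1) * (N-(j+1))^(N-(j+1))) :=
              Nat.mul_le_mul_right _ hkey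
          _ = m.descFactorial k * (N.choose (j+1) * x * (x+(j+1))^(j+1-1) * (N-(j+1))^(N-(j+1))) := by
              ring
    calc (∑ i ∈ Finset.range (N+1),
          if i = 0 then N ^ m else m.choose i * x * (x+i)^(i-1) * (N-i)^(m-i))
        ≤ ∑ i ∈ Finset.range (N+1), m.descFactorial k *
          (if i = 0 then N^N else N.choose i * x * (x+i)^(i-1) * (N-i)^(N-i)) :=
          Finset.sum_le_sum hterm
      _ = m.descFactorial k * ∑ i ∈ Finset.range (N+1),
          (if i = 0 then N^N else N.choose i * x * (x+i)^(i-1) * (N-i)^(N-i)) :=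
          (Finset.mul_sum _ _ _).symm
      _ = m.descFactorial k * (x + N)^N := by rw [abel_nat]
      _ = m.descFactorial k * n^N := by rw [hxN]
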